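/- Let t₁, t₂, t₃ ∈ ℝ be pairwise distinct with (t₁−t₃)(t₂−t₃) < 0, let γ₁, γ₂ ∈ ℝ, and let n₀ ≥ n₃ ≥ 1 be integers. Set N = n₀ + n₃, α = −N, γ₃ = 1/2 − n₃, and assume β := γ₁ + γ₂ + γ₃ − 1 − α equals γ₃ (equivalently γ₁ + γ₂ = 1 − N). Define the polynomials c_m(q) ∈ ℝ[q] by c₀ = 1, (t₁−t₃)(t₂−t₃)γ₃·c₁ = q·c₀, and for m ≥ 1, (t₁−t₃)(t₂−t₃)(m+1)(m+γ₃)·c_{m+1} = −(m−1+α)(m−1+β)·c_{m−1} + [ m·( (m−1+γ₃)(t₁+t₂−2t₃) + (t₂−t₃)γ₁ + (t₁−t₃)γ₂ ) + q ]·c_m. Then c_{N+1} is a real polynomial of degree N+1 all of whose roots are real and pairwise distinct. -/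

import Mathlib

open Polynomial Filter

set_option maxHeartbeats 1000000


lemma monic_eq_prod_of_roots {d : ℕ} {p : ℝ[X]} (hp : p.Monic) (hdeg : p.natDegree = d)
    (t : Fin d → ℝ) (ht : Function.Injective t) (h0 : ∀ i, p.eval (t i) = 0) :
    p = ∏ i : Fin d, (X - C (t i)) := by
  set g : ℝ[X] := ∏ i : Fin d, (X - C (t i)) with hg
  have hgm : g.Monic := monic_prod_of_monic _ _ fun i _ => monic_X_sub_C _
  have hgd : g.natDegree = d := by
    rw [hg, natDegree_prod_of_monic _ _ fun i _ => monic_X_sub_C _]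
    simp
  by_cases hzero : p - g = 0
  · exact sub_eq_zero.mp hzero
  exfalso
  have hdegsub : (p - g).natDegree < d := by
    have h1 : (p - g).degree < p.degree := by
      apply degree_sub_lt
      · rw [degree_eq_natDegree hp.ne_zero, degree_eq_natDegree hgm.ne_zero, hdeg, hgd]
      · exact hp.ne_zero
      · rw [hp.leadingCoeff, hgm.leadingCoeff]
    have h2 : (p - g).degree < (d : ℕ∞) := by
      rw [degree_eq_natDegree hp.ne_zero, hdeg] at h1
      exact_mod_cast h1
    exact natDegree_lt_iff_degree_lt hzero |>.mpr (by exact_mod_cast h2)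
  apply hzero
  apply Polynomial.eq_zero_of_natDegree_lt_card_of_eval_eq_zero _ ht
  · intro i
    have hgi : g.eval (t i) = 0 := by
      rw [hg, eval_prod]
      exact Finset.prod_eq_zero (Finset.mem_univ i) (by simp)
    simp [h0 i, hgi]
  · simpa using hdegsub

lemma exists_root_between {q : ℝ[X]} {x y : ℝ} (hxy : x < y)
    (h : q.eval x * q.eval y < 0) :
    ∃ z, x < z ∧ z < y ∧ q.eval z = 0 := by
  have hcont : ContinuousOn (fun z => q.eval z) (Set.Icc x y) :=
    (q.continuous_aeval).continuousOn
  rcases mul_neg_iff.mp h with ⟨hx, hy⟩ | ⟨hx, hy⟩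
  · obtain ⟨z, hz, hz0⟩ := intermediate_value_Ioo' hxy.le hcont ⟨hy, hx⟩
    exact ⟨z, hz.1, hz.2, hz0⟩
  · obtain ⟨z, hz, hz0⟩ := intermediate_value_Ioo hxy.le hcont ⟨hx, hy⟩
    exact ⟨z, hz.1, hz.2, hz0⟩

lemma jacobi_real_distinct_roots (a b : ℕ → ℝ) (p : ℕ → ℝ[X]) (hp0 : p 0 = 1)
    (hp1 : p 1 = X - C (a 0))
    (hrec : ∀ m, p (m + 2) = (X - C (a (m + 1))) * p (m + 1) - C (b (m + 1)) * p m) :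
    ∀ n, (∀ m, m < n → 0 < b (m + 1)) →
      ∃ (r : Fin n → ℝ) (s : Fin (n + 1) → ℝ), StrictMono r ∧ StrictMono s ∧
        p n = ∏ i, (X - C (r i)) ∧ p (n + 1) = ∏ i, (X - C (s i)) ∧
        ∀ i : Fin n, s i.castSucc < r i ∧ r i < s i.succ := by
  intro n
  induction n with
  | zero =>
    intro _
    refine ⟨Fin.elim0, fun _ => a 0, fun i => i.elim0, ?_, by simp [hp0], ?_, fun i => i.elim0⟩
    · intro i j h
      exact absurd (Fin.lt_iff_val_lt_val.mp h) (by omega)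
    · rw [hp1]
      simp
  | succ n ih =>
    intro hb
    obtain ⟨r, s, hrm, hsm, hpn, hpn1, hint⟩ := ih fun m hm => hb m (Nat.lt_succ_of_lt hm)
    have hb' : 0 < b (n + 1) := hb n (Nat.lt_succ_self n)
    set q : ℝ[X] := p (n + 2) with hqset
    have hqdef : q = (X - C (a (n + 1))) * p (n + 1) - C (b (n + 1)) * p n := hrec n
    have hpnm : (p n).Monic := hpn ▸ monic_prod_of_monic _ _ fun i _ => monic_X_sub_C _
    have hpnd : (p n).natDegree = n := by
      rw [hpn, natDegree_prod_of_monic _ _ fun i _ => monic_X_sub_C _]; simp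
    have hpn1m : (p (n + 1)).Monic := hpn1 ▸ monic_prod_of_monic _ _ fun i _ => monic_X_sub_C _
    have hpn1d : (p (n + 1)).natDegree = n + 1 := by
      rw [hpn1, natDegree_prod_of_monic _ _ fun i _ => monic_X_sub_C _]; simp
    have hbigm : ((X - C (a (n + 1))) * p (n + 1)).Monic := (monic_X_sub_C _).mul hpn1m
    have hbigd : ((X - C (a (n + 1))) * p (n + 1)).degree = ((n + 2 : ℕ) : WithBot ℕ) := by
      rw [degree_mul, degree_X_sub_C, degree_eq_natDegree hpn1m.ne_zero, hpn1d]
      rw [show n + 2 = 1 + (n + 1) by omega]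
      norm_cast
    have hsmalld : (C (b (n + 1)) * p n).degree < ((X - C (a (n + 1))) * p (n + 1)).degree := by
      rw [hbigd]
      calc (C (b (n + 1)) * p n).degree ≤ (C (b (n + 1))).degree + (p n).degree :=
            degree_mul_le _ _
        _ ≤ 0 + (p n).degree := add_le_add degree_C_le le_rfl
        _ = ((n : ℕ) : WithBot ℕ) := by
            rw [zero_add, degree_eq_natDegree hpnm.ne_zero, hpnd]
        _ < ((n + 2 : ℕ) : WithBot ℕ) := by exact_mod_cast Nat.lt_succ_of_lt (Nat.lt_succ_self n)
    have hqm : q.Monic := by rw [hqdef]; exact hbigm.sub_of_left hsmalld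
    have hqd : q.natDegree = n + 2 := by
      apply natDegree_eq_of_degree_eq_some
      rw [hqdef, degree_sub_eq_left_of_degree_lt hsmalld, hbigd]
    have hqs : ∀ j : Fin (n + 1), q.eval (s j) = -(b (n + 1) * (p n).eval (s j)) := by
      intro j
      have h1 : (p (n + 1)).eval (s j) = 0 := by
        rw [hpn1, eval_prod]
        exact Finset.prod_eq_zero (Finset.mem_univ j) (by simp)
      rw [hqdef]
      simp [h1]
    have hpneval : ∀ x : ℝ, (p n).eval x = ∏ i : Fin n, (x - r i) := by
      intro x; rw [hpn, eval_prod]; simp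
    -- sign at the top root of p (n+1)
    have hStop : 0 < (p n).eval (s (Fin.last n)) := by
      rw [hpneval]
      refine Finset.prod_pos fun i _ => ?_
      have h1 : r i < s i.succ := (hint i).2
      have h2 : s i.succ ≤ s (Fin.last n) := hsm.monotone (Fin.le_last _)
      linarith
    -- sign at the bottom root of p (n+1)
    have hSbot : (p n).eval (s 0) = (-1 : ℝ) ^ n * ∏ i : Fin n, (r i - s 0) := by
      rw [hpneval]
      calc ∏ i : Fin n, (s 0 - r i) = ∏ i : Fin n, (-1 : ℝ) * (r i - s 0) :=
            Finset.prod_congr rfl fun i _ => by ring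
        _ = (∏ _i : Fin n, (-1 : ℝ)) * ∏ i : Fin n, (r i - s 0) := Finset.prod_mul_distrib
        _ = (-1 : ℝ) ^ n * ∏ i : Fin n, (r i - s 0) := by
            rw [Finset.prod_const]; simp
    have hP0 : 0 < ∏ i : Fin n, (r i - s 0) := by
      refine Finset.prod_pos fun i _ => ?_
      have h1 : s 0 ≤ s i.castSucc := hsm.monotone (Fin.zero_le _)
      have h2 := (hint i).1
      linarith
    -- alternation of p n at consecutive roots of p (n+1)
    have hT : ∀ j : Fin n, (p n).eval (s j.castSucc) * (p n).eval (s j.succ) < 0 := by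
      intro j
      rw [hpneval, hpneval, ← Finset.prod_mul_distrib]
      rw [← Finset.mul_prod_erase _ _ (Finset.mem_univ j)]
      apply mul_neg_of_neg_of_pos
      · have h1 := (hint j).1
        have h2 := (hint j).2
        apply mul_neg_of_neg_of_pos <;> linarith
      · refine Finset.prod_pos fun i hi => ?_
        have hij : i ≠ j := (Finset.mem_erase.mp hi).1
        have hij' : (i : ℕ) ≠ (j : ℕ) := fun h => hij (Fin.ext h)
        have hcs : s j.castSucc ≤ s j.succ := hsm.monotone (Fin.castSucc_lt_succ : j.castSucc < j.succ).le
        rcases lt_or_gt_of_ne hij' with h | h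
        · have h1 : r i < s i.succ := (hint i).2
          have h2 : s i.succ ≤ s j.castSucc := hsm.monotone (by
            rw [Fin.le_def]; simp only [Fin.val_succ, Fin.coe_castSucc]; omega)
          nlinarith
        · have h1 : s i.castSucc < r i := (hint i).1
          have h2 : s j.succ ≤ s i.castSucc := hsm.monotone (by
            rw [Fin.le_def]; simp only [Fin.val_succ, Fin.coe_castSucc]; omega)
          nlinarith
    -- roots in gaps
    have hgap : ∀ j : Fin n, ∃ z, s j.castSucc < z ∧ z < s j.succ ∧ q.eval z = 0 := by
      intro j
      apply exists_root_between (hsm (Fin.castSucc_lt_succ : j.castSucc < j.succ))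
      rw [hqs, hqs]
      have heq : -(b (n + 1) * (p n).eval (s j.castSucc)) *
          -(b (n + 1) * (p n).eval (s j.succ)) =
          (b (n + 1) * b (n + 1)) * ((p n).eval (s j.castSucc) * (p n).eval (s j.succ)) := by
        ring
      rw [heq]
      exact mul_neg_of_pos_of_neg (mul_pos hb' hb') (hT j)
    -- root on the right
    have hqtop : Tendsto (fun x => q.eval x) atTop atTop := by
      apply q.tendsto_atTop_of_leadingCoeff_nonneg
      · rw [degree_eq_natDegree hqm.ne_zero, hqd]
        exact_mod_cast Nat.succ_pos (n + 1)
      · rw [hqm.leadingCoeff]; norm_num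
    obtain ⟨u, hu1, hu2⟩ :=
      ((hqtop.eventually_gt_atTop 0).and (eventually_gt_atTop (s (Fin.last n)))).exists
    have hqlast : q.eval (s (Fin.last n)) < 0 := by
      rw [hqs]
      nlinarith
    obtain ⟨zR, hzR1, _, hzR3⟩ := exists_root_between hu2
      (mul_neg_of_neg_of_pos hqlast hu1)
    -- root on the left
    set E : ℝ := (-1 : ℝ) ^ n with hE
    have hE2 : E * E = 1 := by
      rw [hE, ← pow_add]
      exact Even.neg_one_pow ⟨n, by ring⟩
    have hEne : E ≠ 0 := by
      rw [hE]; exact pow_ne_zero _ (by norm_num)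
    set Q : ℝ[X] := C E * q.comp (-X) with hQ
    have hcompne : (q.comp (-X)) ≠ 0 := fun h => by
      have := natDegree_comp (p := q) (q := (-X : ℝ[X]))
      rw [h] at this
      simp [hqd] at this
    have hQlc : Q.leadingCoeff = 1 := by
      rw [hQ, leadingCoeff_mul, leadingCoeff_C,
        leadingCoeff_comp (by simp : ((-X : ℝ[X])).natDegree ≠ 0), hqm.leadingCoeff, hqd]
      simp only [leadingCoeff_neg, leadingCoeff_X, one_mul]
      rw [hE, ← pow_add]
      exact Even.neg_one_pow ⟨n + 1, by ring⟩
    have hQd : Q.natDegree = n + 2 := by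
      rw [hQ, natDegree_C_mul hEne, natDegree_comp]
      simp [hqd]
    have hQm : Q.Monic := hQlc
    have hQtop : Tendsto (fun x => Q.eval x) atTop atTop := by
      apply Q.tendsto_atTop_of_leadingCoeff_nonneg
      · rw [degree_eq_natDegree hQm.ne_zero, hQd]
        exact_mod_cast Nat.succ_pos (n + 1)
      · rw [hQlc]; norm_num
    obtain ⟨x, hx1, hx2⟩ :=
      ((hQtop.eventually_gt_atTop 0).and (eventually_gt_atTop (-(s 0)))).exists
    have hxval : Q.eval x = E * q.eval (-x) := by
      rw [hQ]
      simp [eval_comp]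
    have hvlt : -x < s 0 := by linarith
    have hqs0 : q.eval (s 0) = -(b (n + 1) * (E * ∏ i : Fin n, (r i - s 0))) := by
      rw [hqs 0, hSbot]
    have hleft : q.eval (-x) * q.eval (s 0) < 0 := by
      rw [hqs0]
      rw [hxval] at hx1
      nlinarith [mul_pos hb' hP0]
    obtain ⟨zL, _, hzL2, hzL3⟩ := exists_root_between hvlt hleft
    -- assemble the roots
    choose zg hz1 hz2 hz3 using hgap
    set t : Fin (n + 2) → ℝ := fun k =>
      if hk : (k : ℕ) = 0 then zL
      else if hk' : (k : ℕ) < n + 1 then zg ⟨(k : ℕ) - 1, by omega⟩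
      else zR with ht
    have ht0 : ∀ k : Fin (n + 2), (k : ℕ) = 0 → t k = zL := by
      intro k hk; simp only [ht]; rw [dif_pos hk]
    have htmid : ∀ (k : Fin (n + 2)) (hk : (k : ℕ) ≠ 0) (hk' : (k : ℕ) < n + 1),
        t k = zg ⟨(k : ℕ) - 1, by omega⟩ := by
      intro k hk hk'; simp only [ht]; rw [dif_neg hk, dif_pos hk']
    have httop : ∀ k : Fin (n + 2), (k : ℕ) = n + 1 → t k = zR := by
      intro k hk
      simp only [ht]
      rw [dif_neg (by omega), dif_neg (by omega)]
    have hA : ∀ i : Fin (n + 1), t i.castSucc < s i := by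
      intro i
      rcases Nat.eq_zero_or_pos i.val with h0 | h0
      · rw [ht0 i.castSucc (by simp [h0])]
        have : i = 0 := Fin.ext h0
        rw [this]
        exact hzL2
      · rw [htmid i.castSucc (by simp only [Fin.coe_castSucc]; omega) (by simp only [Fin.coe_castSucc]; omega)]
        have hlt := hz2 ⟨(i : ℕ) - 1, by omega⟩
        have heq : (⟨(i : ℕ) - 1, by omega⟩ : Fin n).succ = i := by
          apply Fin.ext; simp; omega
        rw [heq] at hlt
        convert hlt using 3 <;> simp
    have hB : ∀ i : Fin (n + 1), s i < t i.succ := by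
      intro i
      rcases Nat.lt_or_ge (i : ℕ) n with h0 | h0
      · rw [htmid i.succ (by simp) (by simp; omega)]
        have hlt := hz1 ⟨(i : ℕ), h0⟩
        have heq : (⟨(i : ℕ), h0⟩ : Fin n).castSucc = i := by
          apply Fin.ext; simp
        rw [heq] at hlt
        convert hlt using 3 <;> simp
      · have hin : (i : ℕ) = n := by omega
        rw [httop i.succ (by simp [hin])]
        have : i = Fin.last n := Fin.ext (by simp [hin])
        rw [this]
        exact hzR1
    have htmono : StrictMono t := by
      rw [Fin.strictMono_iff_lt_succ]
      exact fun i => (hA i).trans (hB i)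
    have hteval : ∀ k : Fin (n + 2), q.eval (t k) = 0 := by
      intro k
      rcases Nat.eq_zero_or_pos (k : ℕ) with h0 | h0
      · rw [ht0 k h0]; exact hzL3
      rcases Nat.lt_or_ge (k : ℕ) (n + 1) with h1 | h1
      · rw [htmid k (by omega) h1]
        exact hz3 _
      · rw [httop k (by omega)]
        exact hzR3
    have hqprod : q = ∏ k : Fin (n + 2), (X - C (t k)) :=
      monic_eq_prod_of_roots hqm hqd t htmono.injective hteval
    exact ⟨s, t, hsm, htmono, hpn1, hqprod, fun i => ⟨hA i, hB i⟩⟩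

noncomputable def heunMu (D g : ℝ) : ℕ → ℝ
  | 0 => 1
  | m + 1 => heunMu D g m * (D * ((m : ℝ) + 1) * ((m : ℝ) + g))

/-- **Real distinct roots for the Heun recursion with `β = γ₃ = 1/2 - n₃ < 0`.**
With real data `t₁, t₂, t₃` pairwise distinct, `(t₁-t₃)(t₂-t₃) < 0`, integers
`n₀ ≥ n₃ ≥ 1`, `N = n₀ + n₃`, `α = -N`, `γ₃ = β = 1/2 - n₃`, the polynomial
`c_{N+1}` produced by the Heun recursion has degree `N+1` and all its roots are
real and pairwise distinct. -/
theorem heun_recursion_real_distinct_roots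
    (t₁ t₂ t₃ γ₁ γ₂ γ₃ α β : ℝ) (n₀ n₃ N : ℕ)
    (hn₃ : 1 ≤ n₃) (hn₀ : n₃ ≤ n₀) (hN : N = n₀ + n₃)
    (ht12 : t₁ ≠ t₂) (ht23 : t₂ ≠ t₃) (ht13 : t₁ ≠ t₃)
    (hsign : (t₁ - t₃) * (t₂ - t₃) < 0)
    (hα : α = -(N : ℝ)) (hγ₃ : γ₃ = 1 / 2 - (n₃ : ℝ))
    (hβ : β = γ₁ + γ₂ + γ₃ - 1 - α) (hββ : β = γ₃)
    (c : ℕ → Polynomial ℝ)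
    (hc0 : c 0 = 1)
    (hc1 : C ((t₁ - t₃) * (t₂ - t₃) * γ₃) * c 1 = X)
    (hrec : ∀ m : ℕ,
      C ((t₁ - t₃) * (t₂ - t₃) * ((m : ℝ) + 2) * ((m : ℝ) + 1 + γ₃)) * c (m + 2) =
        C (-(((m : ℝ) + α) * ((m : ℝ) + β))) * c m +
        (C (((m : ℝ) + 1) * (((m : ℝ) + γ₃) * (t₁ + t₂ - 2 * t₃) +
            (t₂ - t₃) * γ₁ + (t₁ - t₃) * γ₂)) + X) * c (m + 1)) :
    ∃ (a : ℝ) (s : Fin (N + 1) → ℝ), a ≠ 0 ∧ StrictMono s ∧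
      c (N + 1) = C a * ∏ i : Fin (N + 1), (X - C (s i)) := by
  have hγ₃ne : ∀ m : ℕ, (m : ℝ) + γ₃ ≠ 0 := by
    intro m h
    rw [hγ₃] at h
    have h2 : ((2 * m + 1 : ℕ) : ℝ) = ((2 * n₃ : ℕ) : ℝ) := by push_cast; linarith
    have h3 : 2 * m + 1 = 2 * n₃ := by exact_mod_cast h2
    omega
  have hDne : (t₁ - t₃) * (t₂ - t₃) ≠ 0 := hsign.ne
  have hμne : ∀ m : ℕ, heunMu ((t₁ - t₃) * (t₂ - t₃)) γ₃ m ≠ 0 := by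
    intro m
    induction m with
    | zero => simp [heunMu]
    | succ m ihm =>
      rw [heunMu]
      exact mul_ne_zero ihm (mul_ne_zero (mul_ne_zero hDne (by positivity)) (hγ₃ne m))
  set A : ℕ → ℝ := fun k => -((k : ℝ) * (((k : ℝ) - 1 + γ₃) * (t₁ + t₂ - 2 * t₃) +
      (t₂ - t₃) * γ₁ + (t₁ - t₃) * γ₂)) with hAdef
  set B : ℕ → ℝ := fun k => ((k : ℝ) - 1 + α) * ((k : ℝ) - 1 + β) *
      ((t₁ - t₃) * (t₂ - t₃) * (k : ℝ) * ((k : ℝ) - 1 + γ₃)) with hBdef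
  set P : ℕ → ℝ[X] := fun m => C (heunMu ((t₁ - t₃) * (t₂ - t₃)) γ₃ m) * c m with hPdef
  have hp0 : P 0 = 1 := by simp [hPdef, heunMu, hc0]
  have hp1 : P 1 = X - C (A 0) := by
    have h1 : heunMu ((t₁ - t₃) * (t₂ - t₃)) γ₃ 1 = (t₁ - t₃) * (t₂ - t₃) * γ₃ := by
      simp [heunMu]
    have h2 : A 0 = 0 := by simp [hAdef]
    simp only [hPdef, h2]
    simp only [h1, map_zero, sub_zero]
    exact hc1
  have hprec : ∀ m : ℕ, P (m + 2) = (X - C (A (m + 1))) * P (m + 1) - C (B (m + 1)) * P m := by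
    intro m
    have h := hrec m
    have hμ2 : heunMu ((t₁ - t₃) * (t₂ - t₃)) γ₃ (m + 2) =
        heunMu ((t₁ - t₃) * (t₂ - t₃)) γ₃ (m + 1) *
          ((t₁ - t₃) * (t₂ - t₃) * ((m : ℝ) + 2) * ((m : ℝ) + 1 + γ₃)) := by
      rw [heunMu]
      push_cast
      ring
    have hμ1 : heunMu ((t₁ - t₃) * (t₂ - t₃)) γ₃ (m + 1) =
        heunMu ((t₁ - t₃) * (t₂ - t₃)) γ₃ m *
          ((t₁ - t₃) * (t₂ - t₃) * ((m : ℝ) + 1) * ((m : ℝ) + γ₃)) := by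
      rw [heunMu]
    have hA1 : A (m + 1) = -(((m : ℝ) + 1) * (((m : ℝ) + γ₃) * (t₁ + t₂ - 2 * t₃) +
        (t₂ - t₃) * γ₁ + (t₁ - t₃) * γ₂)) := by
      simp only [hAdef]
      push_cast
      ring
    have hB1 : B (m + 1) = ((m : ℝ) + α) * ((m : ℝ) + β) *
        ((t₁ - t₃) * (t₂ - t₃) * ((m : ℝ) + 1) * ((m : ℝ) + γ₃)) := by
      simp only [hBdef]
      push_cast
      ring
    calc P (m + 2) = C (heunMu ((t₁ - t₃) * (t₂ - t₃)) γ₃ (m + 1)) *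
          (C ((t₁ - t₃) * (t₂ - t₃) * ((m : ℝ) + 2) * ((m : ℝ) + 1 + γ₃)) * c (m + 2)) := by
          simp only [hPdef]
          simp only [hμ2, map_mul]
          ring
      _ = C (heunMu ((t₁ - t₃) * (t₂ - t₃)) γ₃ (m + 1)) *
          (C (-(((m : ℝ) + α) * ((m : ℝ) + β))) * c m +
            (C (((m : ℝ) + 1) * (((m : ℝ) + γ₃) * (t₁ + t₂ - 2 * t₃) +
              (t₂ - t₃) * γ₁ + (t₁ - t₃) * γ₂)) + X) * c (m + 1)) := by rw [h]
      _ = (X - C (A (m + 1))) * P (m + 1) - C (B (m + 1)) * P m := by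
          simp only [hPdef, hA1, hB1, hμ1]
          simp only [map_mul, map_add, map_neg, map_sub, map_one]
          ring
  have hbpos : ∀ m : ℕ, m < N → 0 < B (m + 1) := by
    intro m hm
    have hx : ((m : ℝ) + γ₃) ≠ 0 := hγ₃ne m
    have hmN : (m : ℝ) < (N : ℝ) := by exact_mod_cast hm
    have hsq : 0 < ((m : ℝ) + γ₃) ^ 2 := (sq_nonneg _).lt_of_ne (by
      intro h; exact hx (by nlinarith [h.symm]))
    have hBval : B (m + 1) = (((N : ℝ) - (m : ℝ)) * (-((t₁ - t₃) * (t₂ - t₃)))) *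
        (((m : ℝ) + 1) * ((m : ℝ) + γ₃) ^ 2) := by
      simp only [hBdef]
      rw [hα, hββ]
      push_cast
      ring
    rw [hBval]
    apply mul_pos (mul_pos (by linarith) (by linarith))
    apply mul_pos (by positivity) hsq
  obtain ⟨rr, ss, _, hssm, _, hps, _⟩ :=
    jacobi_real_distinct_roots A B P hp0 hp1 hprec N hbpos
  refine ⟨(heunMu ((t₁ - t₃) * (t₂ - t₃)) γ₃ (N + 1))⁻¹, ss, inv_ne_zero (hμne _), hssm, ?_⟩
  rw [← hps]
  simp only [hPdef]
  rw [← mul_assoc, ← C_mul, inv_mul_cancel₀ (hμne _), C_1, one_mul]
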